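/- Let α ≥ 0 and let c : ℕ × ℕ → ℝ satisfy the recurrence c(k, j) = c(k−1, j) + k·c(k−1, j−1) for all integers 1 ≤ k ≤ j, together with 0 ≤ c(0, j) ≤ α^j for all 0 ≤ j ≤ n. Then c(n, n) ≤ ∏_{k=1}^{n} (α + k). -/

import Mathlib

/-- A double sequence satisfying the deletion–restriction recurrence
`c(k,j) = c(k-1,j) + k·c(k-1,j-1)` for `1 ≤ k ≤ j`, with `0 ≤ c(0,j) ≤ α^j` for
`0 ≤ j ≤ n` and `α ≥ 0`, satisfies `c(n,n) ≤ ∏_{k=1}^n (α + k)`. -/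
theorem recurrence_upper_bound (n : ℕ) (α : ℝ) (hα : 0 ≤ α) (c : ℕ × ℕ → ℝ)
    (hrec : ∀ k j : ℕ, 1 ≤ k → k ≤ j →
      c (k, j) = c (k - 1, j) + (k : ℝ) * c (k - 1, j - 1))
    (hinit : ∀ j : ℕ, j ≤ n → 0 ≤ c (0, j) ∧ c (0, j) ≤ α ^ j) :
    c (n, n) ≤ ∏ k ∈ Finset.Icc 1 n, (α + (k : ℝ)) := by
  have key : ∀ k j : ℕ, k ≤ j → j ≤ n →
      0 ≤ c (k, j) ∧ c (k, j) ≤ α ^ (j - k) * ∏ i ∈ Finset.Icc 1 k, (α + (i : ℝ)) := by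
    intro k
    induction k with
    | zero =>
      intro j _ hjn
      simpa using hinit j hjn
    | succ k ih =>
      intro j hkj hjn
      have hj1 : 1 ≤ j := le_trans (Nat.succ_le_succ (Nat.zero_le k)) hkj
      have h1 := ih j (le_trans (Nat.le_succ k) hkj) hjn
      have h2 := ih (j - 1) (Nat.le_sub_one_of_lt hkj) (le_trans (Nat.sub_le j 1) hjn)
      have hrw := hrec (k + 1) j (Nat.succ_le_succ (Nat.zero_le k)) hkj
      simp only [Nat.add_sub_cancel] at hrw
      have hP : (0:ℝ) ≤ ∏ i ∈ Finset.Icc 1 k, (α + (i : ℝ)) :=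
        Finset.prod_nonneg fun i _ => by positivity
      have hkpos : (0:ℝ) ≤ (k : ℝ) + 1 := by positivity
      constructor
      · rw [hrw]
        push_cast
        nlinarith [h1.1, h2.1]
      · rw [hrw]
        have hsub : j - k = (j - (k + 1)) + 1 := by omega
        have hsub' : j - 1 - k = j - (k + 1) := by omega
        rw [Finset.prod_Icc_succ_top (Nat.succ_le_succ (Nat.zero_le k))]
        have e1 : c (k, j) ≤ α ^ (j - (k+1)) * α * ∏ i ∈ Finset.Icc 1 k, (α + (i : ℝ)) := by
          calc c (k, j) ≤ α ^ (j - k) * ∏ i ∈ Finset.Icc 1 k, (α + (i : ℝ)) := h1.2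
            _ = α ^ (j - (k+1)) * α * ∏ i ∈ Finset.Icc 1 k, (α + (i : ℝ)) := by
                rw [hsub, pow_succ]
        have e2 : c (k, j - 1) ≤ α ^ (j - (k+1)) * ∏ i ∈ Finset.Icc 1 k, (α + (i : ℝ)) := by
          rw [← hsub']; exact h2.2
        have hpow : (0:ℝ) ≤ α ^ (j - (k+1)) := by positivity
        push_cast
        nlinarith [mul_le_mul_of_nonneg_left e2 hkpos]
  have := (key n n le_rfl le_rfl).2
  simpa using this
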